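/- Let C be a channel from a finite nonempty type X to a finite nonempty type Y and let t be a real number with t ≥ 1. Then Lift(π, C) ≤ t holds for every full-support prior π on X if and only if C x y ≤ t · C x' y for all x, x' ∈ X and all y ∈ Y (i.e., C satisfies ε-local differential privacy with e^ε = t). -/

import Mathlib

open Finset

variable {X Y W : Type*}

/-- Output marginal p(y) = ∑_x π x * C x y. -/
noncomputable def marginal [Fintype X] (π : X → ℝ) (C : X → Y → ℝ) (y : Y) : ℝ :=
  ∑ x, π x * C x y

/-- Lift(π, C): max over pairs (x, y) with π x * C x y > 0 of C x y / p(y). -/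
noncomputable def Lift [Fintype X] (π : X → ℝ) (C : X → Y → ℝ) : ℝ :=
  sSup {r : ℝ | ∃ x y, 0 < π x * C x y ∧ r = C x y / marginal π C y}

/-- Lift capacity: the sup over all full-support priors π of Lift(π, C). -/
noncomputable def MaxLift [Fintype X] (C : X → Y → ℝ) : ℝ :=
  sSup {r : ℝ | ∃ π : X → ℝ, (∀ x, 0 < π x) ∧ (∑ x, π x = 1) ∧ r = Lift π C}

/-- Prior g-vulnerability V_g(π) = max_w ∑_x π x * g w x. -/
noncomputable def Vg [Fintype X] [Fintype W] [Nonempty W] (g : W → X → ℝ) (π : X → ℝ) : ℝ :=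
  Finset.univ.sup' Finset.univ_nonempty fun w => ∑ x, π x * g w x

/-- Max-case posterior g-vulnerability: max over y with p(y) > 0 of V_g(δ^y). -/
noncomputable def VgMax [Fintype X] [Fintype W] [Nonempty W]
    (g : W → X → ℝ) (π : X → ℝ) (C : X → Y → ℝ) : ℝ :=
  sSup {r : ℝ | ∃ y, 0 < marginal π C y ∧
    r = Vg g (fun x => π x * C x y / marginal π C y)}

/-- Average-case posterior g-vulnerability V_g⟨π, C⟩ = ∑_y max_w ∑_x π x * C x y * g w x. -/
noncomputable def VgPost [Fintype X] [Fintype Y] [Fintype W] [Nonempty W]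
    (g : W → X → ℝ) (π : X → ℝ) (C : X → Y → ℝ) : ℝ :=
  ∑ y, Finset.univ.sup' Finset.univ_nonempty fun w => ∑ x, π x * C x y * g w x

/-- Lift(π, C) ≤ t for all full-support priors π iff C satisfies ε-LDP with e^ε = t. -/
theorem lift_le_iff_ldp {X Y : Type*} [Fintype X] [Nonempty X] [Fintype Y] [Nonempty Y]
    (C : X → Y → ℝ) (hC0 : ∀ x y, 0 ≤ C x y) (hC1 : ∀ x, ∑ y, C x y = 1)
    (t : ℝ) (ht : 1 ≤ t) :
    (∀ π : X → ℝ, (∀ x, 0 < π x) → (∑ x, π x = 1) → Lift π C ≤ t) ↔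
    (∀ x x' y, C x y ≤ t * C x' y) := by
  classical
  have ht0 : (0:ℝ) < t := lt_of_lt_of_le one_pos ht
  constructor
  · intro h x₀ x₁ y
    by_cases hc : C x₀ y ≤ 0
    · nlinarith [hC0 x₀ y, hC0 x₁ y]
    push_neg at hc
    have hCle1 : ∀ x y, C x y ≤ 1 := by
      intro x y
      calc C x y ≤ ∑ y', C x y' :=
            Finset.single_le_sum (fun y' _ => hC0 x y') (mem_univ y)
        _ = 1 := hC1 x
    apply le_of_forall_pos_le_add
    intro ε hε
    set n : ℝ := (Fintype.card X : ℝ) with hn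
    have hn0 : (0:ℝ) < n := by
      simp [hn, Fintype.card_pos]
    set s : ℝ := min (ε / t) (1/2) with hs
    have hs0 : 0 < s := lt_min (div_pos hε ht0) (by norm_num)
    have hs1 : s ≤ 1/2 := min_le_right _ _
    set π : X → ℝ := fun x => s / n + if x = x₁ then 1 - s else 0 with hπdef
    have hπpos : ∀ x, 0 < π x := by
      intro x
      have : (0:ℝ) ≤ if x = x₁ then 1 - s else 0 := by
        split <;> linarith
      have := div_pos hs0 hn0
      simp only [hπdef]
      positivity
    have hπsum : ∑ x, π x = 1 := by
      simp only [hπdef]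
      rw [Finset.sum_add_distrib, Finset.sum_const, Finset.sum_ite_eq' univ x₁]
      simp [← hn]
      field_simp
      ring
    -- marginal positivity and bounds
    have hmarg_ge : ∀ x, π x * C x y ≤ marginal π C y := by
      intro x
      exact Finset.single_le_sum
        (fun x' _ => mul_nonneg (hπpos x').le (hC0 x' y)) (mem_univ x)
    have hpos0 : 0 < π x₀ * C x₀ y := mul_pos (hπpos x₀) hc
    have hp_pos : 0 < marginal π C y := lt_of_lt_of_le hpos0 (hmarg_ge x₀)
    -- boundedness of the Lift set
    have hbdd : BddAbove {r : ℝ | ∃ x y', 0 < π x * C x y' ∧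
        r = C x y' / marginal π C y'} := by
      refine ⟨∑ x, 1 / π x, ?_⟩
      rintro r ⟨x, y', hxy, rfl⟩
      have hCx : 0 < C x y' := by
        have := hπpos x; nlinarith
      have hge : π x * C x y' ≤ marginal π C y' :=
        Finset.single_le_sum
          (fun x' _ => mul_nonneg (hπpos x').le (hC0 x' y')) (mem_univ x)
      have h1 : C x y' / marginal π C y' ≤ C x y' / (π x * C x y') := by
        gcongr
      have h2 : C x y' / (π x * C x y') = 1 / π x := by
        field_simp [hCx.ne', (hπpos x).ne']
      have h3 : 1 / π x ≤ ∑ x', 1 / π x' :=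
        Finset.single_le_sum (f := fun x' => 1 / π x')
          (fun x' _ => by have := hπpos x'; positivity) (mem_univ x)
      linarith [h1, h2 ▸ h1]
    have hmem : C x₀ y / marginal π C y ∈ {r : ℝ | ∃ x y', 0 < π x * C x y' ∧
        r = C x y' / marginal π C y'} := ⟨x₀, y, hpos0, rfl⟩
    have hle : C x₀ y / marginal π C y ≤ t :=
      le_trans (le_csSup hbdd hmem) (h π hπpos hπsum)
    have hle' : C x₀ y ≤ t * marginal π C y := by
      rw [div_le_iff₀ hp_pos] at hle; linarith
    -- bound the marginal: p(y) ≤ s + C x₁ y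
    have hpbound : marginal π C y ≤ s + C x₁ y := by
      have : marginal π C y = (∑ x, s / n * C x y) + (1 - s) * C x₁ y := by
        simp only [marginal, hπdef, add_mul, Finset.sum_add_distrib]
        congr 1
        rw [Finset.sum_congr rfl (fun x _ => by
          rcases eq_or_ne x x₁ with h | h <;> simp [h] : ∀ x ∈ univ,
          (if x = x₁ then 1 - s else 0) * C x y
            = if x = x₁ then (1 - s) * C x₁ y else 0)]
        rw [Finset.sum_ite_eq' univ x₁]
        simp
      rw [this]
      have h1 : ∑ x, s / n * C x y ≤ s := by
        calc ∑ x, s / n * C x y ≤ ∑ _x : X, s / n * 1 := by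
              apply Finset.sum_le_sum
              intro x _
              exact mul_le_mul_of_nonneg_left (hCle1 x y) (by positivity)
          _ = s := by
              rw [Finset.sum_const, card_univ]
              simp [← hn]
              field_simp
      have h2 : (1 - s) * C x₁ y ≤ C x₁ y := by nlinarith [hC0 x₁ y]
      linarith
    have hts : t * s ≤ ε := by
      have : s ≤ ε / t := min_le_left _ _
      calc t * s ≤ t * (ε / t) := by nlinarith
        _ = ε := by field_simp
    nlinarith
  · intro h π hπ hπ1
    apply Real.sSup_le
    · rintro r ⟨x, y, hpos, rfl⟩
      have hCx : 0 < C x y := by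
        have := hπ x; nlinarith
      have hp : C x y / t ≤ marginal π C y := by
        calc C x y / t = ∑ x', π x' * (C x y / t) := by
              rw [← Finset.sum_mul, hπ1, one_mul]
          _ ≤ ∑ x', π x' * C x' y := by
              apply Finset.sum_le_sum
              intro x' _
              apply mul_le_mul_of_nonneg_left _ (hπ x').le
              rw [div_le_iff₀ ht0]
              calc C x y ≤ t * C x' y := h x x' y
                _ = C x' y * t := mul_comm _ _
          _ = marginal π C y := rfl
      have hp_pos : 0 < marginal π C y :=
        lt_of_lt_of_le (by positivity) hp
      rw [div_le_iff₀ hp_pos]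
      calc C x y = t * (C x y / t) := by field_simp
        _ ≤ t * marginal π C y := by nlinarith
    · linarith
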